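/- Let X be a nonnegative random variable with P(X > y) ~ A y^{-δ} as y → ∞, for constants A > 0, 0 < δ < 1, and let h be a positive random variable independent of X with E[h^δ] < ∞, E[h^{-δ}] < ∞. Suppose additionally P(h < θ h') = O(θ) as θ → 0 for an independent copy h' of h. Then for constants a, b > 0, P(h a / (h' b + X) < θ) ~ A a^{-δ} E[h^{-δ}] θ^δ as θ → 0+, where h' is independent of (h, X). -/

import Mathlib

set_option maxHeartbeats 1000000


open MeasureTheory ProbabilityTheory Real Filter

/-- Theorem 2 of the paper (abstract form): if P(X > y) ~ A y^{-δ}, h, h' i.i.d.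
    positive and independent of X with E[h^δ], E[h^{-δ}] < ∞ and
    P(h < θ h') = O(θ) as θ → 0+, then for a, b > 0,
    P(h a / (h' b + X) < θ) ~ A a^{-δ} E[h^{-δ}] θ^δ as θ → 0+. -/
theorem stmt_18 {Ω : Type*} [MeasureSpace Ω] [IsProbabilityMeasure (ℙ : Measure Ω)]
    (A δ a b : ℝ) (hA : 0 < A) (hδ0 : 0 < δ) (hδ1 : δ < 1) (ha : 0 < a) (hb : 0 < b)
    (X h h' : Ω → ℝ) (hXmeas : Measurable X) (hhmeas : Measurable h)
    (hh'meas : Measurable h')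
    (hXnonneg : ∀ ω, 0 ≤ X ω) (hhpos : ∀ᵐ ω ∂ℙ, 0 < h ω) (hh'pos : ∀ᵐ ω ∂ℙ, 0 < h' ω)
    (htail : Tendsto (fun y : ℝ => y ^ δ * (ℙ {ω | y < X ω}).toReal) atTop (nhds A))
    (hiid : Measure.map h ℙ = Measure.map h' ℙ)
    (hindep : iIndepFun ![h, h', X] ℙ)
    (hmom₁ : Integrable (fun ω => h ω ^ δ) ℙ)
    (hmom₂ : Integrable (fun ω => h ω ^ (-δ)) ℙ)
    (hratio : (fun θ : ℝ => (ℙ {ω | h ω < θ * h' ω}).toReal)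
      =O[nhdsWithin 0 (Set.Ioi 0)] (fun θ : ℝ => θ)) :
    Tendsto
      (fun θ : ℝ => (ℙ {ω | h ω * a / (h' ω * b + X ω) < θ}).toReal / θ ^ δ)
      (nhdsWithin 0 (Set.Ioi 0))
      (nhds (A * a ^ (-δ) * ∫ ω, h ω ^ (-δ))) := by
  classical
  have hc : (0:ℝ) < 2 * b / a := by positivity
  set c : ℝ := 2 * b / a with hcdef
  -- the tail function of X
  set F : ℝ → ENNReal := fun y => ℙ {ω | y < X ω} with hFdef
  have hFanti : Antitone F := fun y₁ y₂ hle =>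
    measure_mono fun ω hω => lt_of_le_of_lt hle hω
  have hFmeas : Measurable F := hFanti.measurable
  have htailF : Tendsto (fun y : ℝ => y ^ δ * (F y).toReal) atTop (nhds A) := by
    simpa [hFdef] using htail
  have hFle1 : ∀ y, (F y).toReal ≤ 1 := by
    intro y
    have : F y ≤ 1 := prob_le_one
    simpa using ENNReal.toReal_mono ENNReal.one_ne_top this
  -- tail bound : (F y).toReal ≤ C y^{-δ} for all y > 0
  obtain ⟨C, hC0, hCb⟩ : ∃ C : ℝ, 0 < C ∧ ∀ y : ℝ, 0 < y → (F y).toReal ≤ C * y ^ (-δ) := by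
    obtain ⟨y₀, hy₀⟩ := eventually_atTop.1 (htailF.eventually (eventually_le_nhds (lt_add_one A)))
    set y₁ : ℝ := max y₀ 1 with hy₁def
    have hy₁ : 0 < y₁ := lt_of_lt_of_le one_pos (le_max_right _ _)
    refine ⟨max (A + 1) (y₁ ^ δ), lt_of_lt_of_le (by linarith) (le_max_left _ _), ?_⟩
    intro y hy
    have hyinv : 0 < y ^ (-δ) := rpow_pos_of_pos hy _
    rcases le_or_gt y₁ y with h1 | h1
    · have hb1 : y ^ δ * (F y).toReal ≤ A + 1 := hy₀ y (le_trans (le_max_left _ _) h1)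
      have hyd : 0 < y ^ δ := rpow_pos_of_pos hy _
      have h2 : (F y).toReal ≤ (A + 1) / y ^ δ := (le_div_iff₀ hyd).mpr (by nlinarith)
      have h3 : (A + 1) / y ^ δ = (A + 1) * y ^ (-δ) := by
        rw [rpow_neg hy.le, div_eq_mul_inv]
      calc (F y).toReal ≤ (A + 1) * y ^ (-δ) := by rw [← h3]; exact h2
        _ ≤ max (A + 1) (y₁ ^ δ) * y ^ (-δ) :=
            mul_le_mul_of_nonneg_right (le_max_left _ _) hyinv.le
    · have h2 : y₁ ^ (-δ) ≤ y ^ (-δ) :=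
        rpow_le_rpow_of_nonpos hy h1.le (neg_nonpos.mpr hδ0.le)
      have h4 : (1:ℝ) ≤ y₁ ^ δ * y ^ (-δ) := by
        calc (1:ℝ) = y₁ ^ δ * y₁ ^ (-δ) := by
              rw [← rpow_add hy₁]; simp
          _ ≤ y₁ ^ δ * y ^ (-δ) :=
              mul_le_mul_of_nonneg_left h2 (rpow_pos_of_pos hy₁ δ).le
      calc (F y).toReal ≤ 1 := hFle1 y
        _ ≤ y₁ ^ δ * y ^ (-δ) := h4
        _ ≤ max (A + 1) (y₁ ^ δ) * y ^ (-δ) :=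
            mul_le_mul_of_nonneg_right (le_max_right _ _) hyinv.le
  -- independence of (h, h') and X
  have hYmeas : Measurable fun ω => (h ω, h' ω) := hhmeas.prodMk hh'meas
  have hInd : IndepFun (fun ω => (h ω, h' ω)) X ℙ := by
    have hm : ∀ i, Measurable (![h, h', X] i) := by
      intro i; fin_cases i <;> simpa using ‹_›
    have := hindep.indepFun_prodMk hm 0 1 2 (by decide) (by decide)
    simpa using this
  have hmap : Measure.map (fun ω => ((h ω, h' ω), X ω)) ℙ
      = (Measure.map (fun ω => (h ω, h' ω)) ℙ).prod (Measure.map X ℙ) :=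
    (indepFun_iff_map_prod_eq_prod_map_map hYmeas.aemeasurable hXmeas.aemeasurable).1 hInd
  haveI : IsProbabilityMeasure (Measure.map X ℙ) := Measure.isProbabilityMeasure_map hXmeas.aemeasurable
  haveI : IsProbabilityMeasure (Measure.map (fun ω => (h ω, h' ω)) ℙ) :=
    Measure.isProbabilityMeasure_map hYmeas.aemeasurable
  -- key identity via independence
  have key : ∀ θ : ℝ, 0 < θ →
      ℙ ({ω | h ω * a / θ - h' ω * b < X ω} \ {ω | h ω < c * θ * h' ω})
        = ∫⁻ ω, Set.indicator {ω | c * θ * h' ω ≤ h ω}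
            (fun ω => F (h ω * a / θ - h' ω * b)) ω ∂ℙ := by
    intro θ hθ
    set S : Set ((ℝ × ℝ) × ℝ) :=
      {q | q.1.1 * a / θ - q.1.2 * b < q.2 ∧ c * θ * q.1.2 ≤ q.1.1} with hSdef
    have hSmeas : MeasurableSet S := by
      have h1 : MeasurableSet {q : (ℝ × ℝ) × ℝ | q.1.1 * a / θ - q.1.2 * b < q.2} :=
        measurableSet_lt (by fun_prop) (by fun_prop)
      have h2 : MeasurableSet {q : (ℝ × ℝ) × ℝ | c * θ * q.1.2 ≤ q.1.1} :=
        measurableSet_le (by fun_prop) (by fun_prop)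
      exact h1.inter h2
    have hGmeas : Measurable (Set.indicator {p : ℝ × ℝ | c * θ * p.2 ≤ p.1}
        (fun p => F (p.1 * a / θ - p.2 * b))) := by
      exact (hFmeas.comp (by fun_prop)).indicator
        (measurableSet_le (by fun_prop) (by fun_prop))
    have hpre : {ω | h ω * a / θ - h' ω * b < X ω} \ {ω | h ω < c * θ * h' ω}
        = (fun ω => ((h ω, h' ω), X ω)) ⁻¹' S := by
      ext ω
      simp only [hSdef, Set.mem_diff, Set.mem_setOf_eq, Set.mem_preimage, not_lt]
    have hslice : ∀ p : ℝ × ℝ, (Measure.map X ℙ) (Prod.mk p ⁻¹' S)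
        = Set.indicator {p : ℝ × ℝ | c * θ * p.2 ≤ p.1}
            (fun p => F (p.1 * a / θ - p.2 * b)) p := by
      intro p
      by_cases hp : p ∈ {p : ℝ × ℝ | c * θ * p.2 ≤ p.1}
      · rw [Set.indicator_of_mem hp]
        have hps : Prod.mk p ⁻¹' S = {x | p.1 * a / θ - p.2 * b < x} := by
          ext x; simp only [hSdef, Set.mem_preimage, Set.mem_setOf_eq]
          exact and_iff_left hp
        rw [hps, Measure.map_apply hXmeas
          (show MeasurableSet {x : ℝ | p.1 * a / θ - p.2 * b < x} from measurableSet_Ioi)]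
        rfl
      · rw [Set.indicator_of_notMem hp]
        have hps : Prod.mk p ⁻¹' S = ∅ := by
          ext x
          simp only [hSdef, Set.mem_preimage, Set.mem_setOf_eq, Set.mem_empty_iff_false,
            iff_false, not_and]
          exact fun _ => hp
        simp [hps]
    calc ℙ ({ω | h ω * a / θ - h' ω * b < X ω} \ {ω | h ω < c * θ * h' ω})
        = ℙ ((fun ω => ((h ω, h' ω), X ω)) ⁻¹' S) := by rw [hpre]
      _ = (Measure.map (fun ω => ((h ω, h' ω), X ω)) ℙ) S :=
          (Measure.map_apply (hYmeas.prodMk hXmeas) hSmeas).symm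
      _ = ((Measure.map (fun ω => (h ω, h' ω)) ℙ).prod (Measure.map X ℙ)) S := by rw [hmap]
      _ = ∫⁻ p, (Measure.map X ℙ) (Prod.mk p ⁻¹' S) ∂(Measure.map (fun ω => (h ω, h' ω)) ℙ) :=
          Measure.prod_apply hSmeas
      _ = ∫⁻ p, Set.indicator {p : ℝ × ℝ | c * θ * p.2 ≤ p.1}
            (fun p => F (p.1 * a / θ - p.2 * b)) p ∂(Measure.map (fun ω => (h ω, h' ω)) ℙ) :=
          lintegral_congr hslice
      _ = ∫⁻ ω, Set.indicator {p : ℝ × ℝ | c * θ * p.2 ≤ p.1}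
            (fun p => F (p.1 * a / θ - p.2 * b)) (h ω, h' ω) ∂ℙ :=
          lintegral_map hGmeas hYmeas
      _ = ∫⁻ ω, Set.indicator {ω | c * θ * h' ω ≤ h ω}
            (fun ω => F (h ω * a / θ - h' ω * b)) ω ∂ℙ := by
          apply lintegral_congr
          intro ω
          by_cases hω : c * θ * h' ω ≤ h ω
          · rw [Set.indicator_of_mem (by exact hω), Set.indicator_of_mem (by exact hω)]
          · rw [Set.indicator_of_notMem (by exact hω), Set.indicator_of_notMem (by exact hω)]
  -- the real-valued main term
  set g : ℝ → Ω → ℝ := fun θ ω => Set.indicator {ω | c * θ * h' ω ≤ h ω}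
      (fun ω => (F (h ω * a / θ - h' ω * b)).toReal) ω with hgdef
  have hgmeas : ∀ θ, Measurable (g θ) := by
    intro θ
    exact (Measurable.ennreal_toReal (hFmeas.comp (by fun_prop))).indicator
      (measurableSet_le (by fun_prop) hhmeas)
  have hgnn : ∀ θ ω, 0 ≤ g θ ω := fun θ ω =>
    Set.indicator_nonneg (fun _ _ => ENNReal.toReal_nonneg) ω
  have keyR : ∀ θ : ℝ, 0 < θ →
      (ℙ ({ω | h ω * a / θ - h' ω * b < X ω} \ {ω | h ω < c * θ * h' ω})).toReal
        = ∫ ω, g θ ω ∂ℙ := by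
    intro θ hθ
    rw [key θ hθ, ← integral_toReal]
    · apply integral_congr_ae
      filter_upwards with ω
      by_cases hω : ω ∈ {ω | c * θ * h' ω ≤ h ω}
      · simp [hgdef, Set.indicator_of_mem hω]
      · simp [hgdef, Set.indicator_of_notMem hω]
    · exact ((hFmeas.comp (by fun_prop)).indicator
        (measurableSet_le (by fun_prop) hhmeas)).aemeasurable
    · filter_upwards with ω
      exact lt_of_le_of_lt (Set.indicator_le_self _ _ ω) (measure_lt_top _ _)
  -- decomposition of the probability
  have decomp : ∀ θ : ℝ, 0 < θ →
      (ℙ {ω | h ω * a / (h' ω * b + X ω) < θ}).toReal / θ ^ δ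
        = (∫ ω, g θ ω ∂ℙ) / θ ^ δ
          + (ℙ ({ω | h ω * a / θ - h' ω * b < X ω} ∩ {ω | h ω < c * θ * h' ω})).toReal / θ ^ δ := by
    intro θ hθ
    have hmE : MeasurableSet {ω | h ω < c * θ * h' ω} :=
      measurableSet_lt hhmeas (by fun_prop)
    have hsplit := measure_diff_add_inter (μ := ℙ) {ω | h ω * a / θ - h' ω * b < X ω} hmE
    have hTT' : ℙ {ω | h ω * a / (h' ω * b + X ω) < θ}
        = ℙ {ω | h ω * a / θ - h' ω * b < X ω} := by
      apply measure_congr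
      rw [Filter.eventuallyEq_set]
      filter_upwards [hh'pos] with ω hω'
      have hden : 0 < h' ω * b + X ω :=
        add_pos_of_pos_of_nonneg (mul_pos hω' hb) (hXnonneg ω)
      rw [div_lt_iff₀ hden, sub_lt_iff_lt_add, div_lt_iff₀ hθ]
      have hring : θ * (h' ω * b + X ω) = (X ω + h' ω * b) * θ := by ring
      constructor <;> intro hx <;> linarith
    rw [hTT', ← hsplit, ENNReal.toReal_add (measure_ne_top _ _) (measure_ne_top _ _), add_div,
      keyR θ hθ]
  -- the remainder term tends to 0
  have hrem : Tendsto (fun θ : ℝ =>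
      (ℙ ({ω | h ω * a / θ - h' ω * b < X ω} ∩ {ω | h ω < c * θ * h' ω})).toReal / θ ^ δ)
      (nhdsWithin 0 (Set.Ioi 0)) (nhds 0) := by
    have hco : Tendsto (fun θ : ℝ => c * θ) (nhdsWithin 0 (Set.Ioi 0))
        (nhdsWithin 0 (Set.Ioi 0)) := by
      rw [tendsto_nhdsWithin_iff]
      constructor
      · have h1 : Tendsto (fun θ : ℝ => c * θ) (nhds 0) (nhds (c * 0)) :=
          (continuous_const.mul continuous_id).tendsto 0
        simpa using h1.mono_left nhdsWithin_le_nhds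
      · filter_upwards [self_mem_nhdsWithin] with θ hθ
        exact mul_pos hc hθ
    obtain ⟨K, hK⟩ := (hratio.comp_tendsto hco).bound
    apply squeeze_zero' (g := fun θ => (K * c) * θ ^ (1 - δ))
    · filter_upwards [self_mem_nhdsWithin] with θ hθ
      have hθ : (0:ℝ) < θ := hθ
      positivity
    · filter_upwards [hK, self_mem_nhdsWithin] with θ hKθ hθ
      have hθ : (0:ℝ) < θ := hθ
      have hmono : (ℙ ({ω | h ω * a / θ - h' ω * b < X ω} ∩ {ω | h ω < c * θ * h' ω})).toReal
          ≤ (ℙ {ω | h ω < c * θ * h' ω}).toReal :=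
        ENNReal.toReal_mono (measure_ne_top _ _) (measure_mono Set.inter_subset_right)
      have h2 : (ℙ {ω | h ω < c * θ * h' ω}).toReal ≤ K * (c * θ) := by
        have := hKθ
        simp only [Function.comp] at this
        rwa [Real.norm_eq_abs, Real.norm_eq_abs, abs_of_nonneg ENNReal.toReal_nonneg,
          abs_of_pos (mul_pos hc hθ)] at this
      have hpow : (0:ℝ) < θ ^ δ := rpow_pos_of_pos hθ δ
      calc (ℙ ({ω | h ω * a / θ - h' ω * b < X ω} ∩ {ω | h ω < c * θ * h' ω})).toReal / θ ^ δ
          ≤ (K * (c * θ)) / θ ^ δ := by gcongr; linarith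
        _ = (K * c) * θ ^ (1 - δ) := by
            rw [rpow_sub hθ, rpow_one]
            field_simp
    · have h1 : Tendsto (fun θ : ℝ => θ ^ (1 - δ)) (nhdsWithin 0 (Set.Ioi 0)) (nhds 0) := by
        have h2 := (Real.continuousAt_rpow_const 0 (1 - δ) (Or.inr (by linarith))).tendsto
        have h3 : (0:ℝ) ^ (1 - δ) = 0 := Real.zero_rpow (by linarith)
        rw [h3] at h2
        exact h2.mono_left nhdsWithin_le_nhds
      simpa using h1.const_mul (K * c)
  -- the main term converges by dominated convergence
  have hmain : Tendsto (fun θ : ℝ => (∫ ω, g θ ω ∂ℙ) / θ ^ δ) (nhdsWithin 0 (Set.Ioi 0))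
      (nhds (A * a ^ (-δ) * ∫ ω, h ω ^ (-δ))) := by
    have hDCT : Tendsto (fun θ : ℝ => ∫ ω, g θ ω / θ ^ δ ∂ℙ) (nhdsWithin 0 (Set.Ioi 0))
        (nhds (∫ ω, (A * a ^ (-δ)) * h ω ^ (-δ) ∂ℙ)) := by
      apply tendsto_integral_filter_of_dominated_convergence
        (fun ω => (C * (a / 2) ^ (-δ)) * h ω ^ (-δ))
      · filter_upwards with θ
        exact ((hgmeas θ).div_const _).aestronglyMeasurable
      · filter_upwards [self_mem_nhdsWithin] with θ hθ
        have hθ : (0:ℝ) < θ := hθ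
        filter_upwards [hhpos, hh'pos] with ω hω hω'
        have hpow : (0:ℝ) < θ ^ δ := rpow_pos_of_pos hθ δ
        rw [Real.norm_eq_abs, abs_of_nonneg (div_nonneg (hgnn θ ω) hpow.le)]
        by_cases hind : ω ∈ {ω | c * θ * h' ω ≤ h ω}
        · have hind' : c * θ * h' ω ≤ h ω := hind
          have h1 : h' ω * b ≤ h ω * a / (2 * θ) := by
            rw [le_div_iff₀ (by positivity)]
            rw [hcdef] at hind'
            have h2 := mul_le_mul_of_nonneg_right hind' ha.le
            have h3 : 2 * b / a * θ * h' ω * a = h' ω * b * (2 * θ) := by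
              field_simp
            linarith
          have hy : h ω * a / (2 * θ) ≤ h ω * a / θ - h' ω * b := by
            have h4 : h ω * a / θ = h ω * a / (2 * θ) + h ω * a / (2 * θ) := by
              field_simp; ring
            linarith
          have hypos : (0:ℝ) < h ω * a / (2 * θ) := by positivity
          have hFb : (F (h ω * a / θ - h' ω * b)).toReal
              ≤ C * (h ω * a / (2 * θ)) ^ (-δ) := by
            calc (F (h ω * a / θ - h' ω * b)).toReal
                ≤ C * (h ω * a / θ - h' ω * b) ^ (-δ) :=
                  hCb _ (lt_of_lt_of_le hypos hy)
              _ ≤ C * (h ω * a / (2 * θ)) ^ (-δ) :=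
                  mul_le_mul_of_nonneg_left
                    (rpow_le_rpow_of_nonpos hypos hy (neg_nonpos.mpr hδ0.le)) hC0.le
          have heq : C * (h ω * a / (2 * θ)) ^ (-δ)
              = (C * (a / 2) ^ (-δ)) * h ω ^ (-δ) * θ ^ δ := by
            rw [show h ω * a / (2 * θ) = (h ω * (a / 2)) / θ by ring,
              Real.div_rpow (by positivity) hθ.le,
              Real.mul_rpow hω.le (by positivity),
              Real.rpow_neg hθ.le δ, div_eq_mul_inv, inv_inv]
            ring
          have hgval : g θ ω = (F (h ω * a / θ - h' ω * b)).toReal := by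
            rw [hgdef]; exact Set.indicator_of_mem hind _
          rw [hgval, div_le_iff₀ hpow]
          calc (F (h ω * a / θ - h' ω * b)).toReal
              ≤ C * (h ω * a / (2 * θ)) ^ (-δ) := hFb
            _ = (C * (a / 2) ^ (-δ)) * h ω ^ (-δ) * θ ^ δ := heq
        · have hgval : g θ ω = 0 := by
            rw [hgdef]; exact Set.indicator_of_notMem hind _
          rw [hgval, zero_div]
          exact mul_nonneg (by positivity) (Real.rpow_nonneg hω.le _)
      · exact hmom₂.const_mul _
      · filter_upwards [hhpos, hh'pos] with ω hω hω'
        have hyTop : Tendsto (fun θ : ℝ => h ω * a / θ - h' ω * b)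
            (nhdsWithin 0 (Set.Ioi 0)) atTop := by
          have h1 : Tendsto (fun θ : ℝ => h ω * a * θ⁻¹) (nhdsWithin 0 (Set.Ioi 0)) atTop :=
            tendsto_inv_nhdsGT_zero.const_mul_atTop (by positivity)
          have h2 := tendsto_atTop_add_const_right (nhdsWithin (0:ℝ) (Set.Ioi 0))
            (-(h' ω * b)) h1
          simpa [div_eq_mul_inv, sub_eq_add_neg] using h2
        have hT1 : Tendsto (fun θ : ℝ =>
            (h ω * a / θ - h' ω * b) ^ δ * (F (h ω * a / θ - h' ω * b)).toReal)
            (nhdsWithin 0 (Set.Ioi 0)) (nhds A) := htailF.comp hyTop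
        have hT2 : Tendsto (fun θ : ℝ => (h ω * a - θ * (h' ω * b)) ^ (-δ))
            (nhdsWithin 0 (Set.Ioi 0)) (nhds ((h ω * a) ^ (-δ))) := by
          have hcont : Tendsto (fun θ : ℝ => h ω * a - θ * (h' ω * b))
              (nhdsWithin 0 (Set.Ioi 0)) (nhds (h ω * a)) := by
            have h1 : Tendsto (fun θ : ℝ => h ω * a - θ * (h' ω * b)) (nhds 0)
                (nhds (h ω * a - 0 * (h' ω * b))) :=
              (continuous_const.sub (continuous_id.mul continuous_const)).tendsto 0
            simpa using h1.mono_left nhdsWithin_le_nhds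
          exact ((Real.continuousAt_rpow_const _ _
            (Or.inl (by positivity : (0:ℝ) < h ω * a).ne')).tendsto.comp hcont)
        have hlim := hT1.mul hT2
        have hval : A * (h ω * a) ^ (-δ) = (A * a ^ (-δ)) * h ω ^ (-δ) := by
          rw [Real.mul_rpow hω.le ha.le]; ring
        rw [hval] at hlim
        refine Tendsto.congr' ?_ hlim
        have hmem : Set.Ioo (0:ℝ) (h ω / (c * h' ω)) ∈ nhdsWithin 0 (Set.Ioi 0) :=
          Ioo_mem_nhdsGT (by positivity)
        filter_upwards [hmem] with θ hθmem
        obtain ⟨hθ, hθlt⟩ := hθmem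
        have hind : c * θ * h' ω ≤ h ω := by
          rw [lt_div_iff₀ (by positivity)] at hθlt
          calc c * θ * h' ω = θ * (c * h' ω) := by ring
            _ ≤ h ω := hθlt.le
        have hypos : (0:ℝ) < h ω * a / θ - h' ω * b := by
          rw [sub_pos, lt_div_iff₀ hθ]
          rw [lt_div_iff₀ (by positivity)] at hθlt
          have hca : c * a = 2 * b := by rw [hcdef]; field_simp
          have h5 : θ * (c * h' ω) * a < h ω * a := mul_lt_mul_of_pos_right hθlt ha
          have h6 : θ * (c * h' ω) * a = 2 * (h' ω * b * θ) := by
            calc θ * (c * h' ω) * a = (c * a) * (θ * h' ω) := by ring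
              _ = 2 * b * (θ * h' ω) := by rw [hca]
              _ = 2 * (h' ω * b * θ) := by ring
          nlinarith [mul_pos (mul_pos hω' hb) hθ]
        have h3 : h ω * a - θ * (h' ω * b) = θ * (h ω * a / θ - h' ω * b) := by
          rw [mul_sub, mul_div_cancel₀ _ hθ.ne']
        have hg : g θ ω = (F (h ω * a / θ - h' ω * b)).toReal := by
          rw [hgdef]
          exact Set.indicator_of_mem (show ω ∈ {ω | c * θ * h' ω ≤ h ω} from hind) _
        have hyδ : (0:ℝ) < (h ω * a / θ - h' ω * b) ^ δ := rpow_pos_of_pos hypos δ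
        have hθδ : (0:ℝ) < θ ^ δ := rpow_pos_of_pos hθ δ
        show (h ω * a / θ - h' ω * b) ^ δ * (F (h ω * a / θ - h' ω * b)).toReal
            * (h ω * a - θ * (h' ω * b)) ^ (-δ) = g θ ω / θ ^ δ
        rw [hg, h3, Real.mul_rpow hθ.le hypos.le, Real.rpow_neg hθ.le, Real.rpow_neg hypos.le,
          div_eq_mul_inv]
        calc (h ω * a / θ - h' ω * b) ^ δ * (F (h ω * a / θ - h' ω * b)).toReal
              * ((θ ^ δ)⁻¹ * ((h ω * a / θ - h' ω * b) ^ δ)⁻¹)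
            = ((h ω * a / θ - h' ω * b) ^ δ * ((h ω * a / θ - h' ω * b) ^ δ)⁻¹)
              * ((F (h ω * a / θ - h' ω * b)).toReal * (θ ^ δ)⁻¹) := by ring
          _ = (F (h ω * a / θ - h' ω * b)).toReal * (θ ^ δ)⁻¹ := by
              rw [mul_inv_cancel₀ hyδ.ne', one_mul]
    have hDCT2 : Tendsto (fun θ : ℝ => ∫ ω, g θ ω / θ ^ δ ∂ℙ) (nhdsWithin 0 (Set.Ioi 0))
        (nhds (A * a ^ (-δ) * ∫ ω, h ω ^ (-δ))) := by
      rwa [integral_const_mul] at hDCT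
    apply hDCT2.congr'
    filter_upwards [self_mem_nhdsWithin] with θ hθ
    rw [integral_div]
  -- combine
  have hfin := hmain.add hrem
  rw [add_zero] at hfin
  apply hfin.congr'
  filter_upwards [self_mem_nhdsWithin] with θ hθ
  exact (decomp θ hθ).symm
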